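/- Let F be a stable (shift-closed) r-uniform hypergraph on [n], let R₀ ⊆ [n], and let I′ be an initial segment of the ordered set [n] \ R₀ with |I′| ≥ r·t. If F contains t pairwise disjoint edges all avoiding R₀, then F contains t pairwise disjoint edges avoiding R₀ and all contained in I′. -/

import Mathlib

/-- `A ⪯ B` coordinatewise: the sorted list of `A` is pointwise at most the sorted list of `B`. -/
def DomList (A B : Finset ℕ) : Prop :=
  List.Forall₂ (· ≤ ·) (A.sort (· ≤ ·)) (B.sort (· ≤ ·))

/-- A family of finite sets of positive integers is stable (compressed) if it is closed under
coordinatewise decrease. -/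
def StableFam (F : Finset (Finset ℕ)) : Prop :=
  ∀ B ∈ F, ∀ A : Finset ℕ, (∀ a ∈ A, 1 ≤ a) → DomList A B → A ∈ F

/-- If `f` is strictly monotone on `e` and decreasing pointwise, then the image dominates below. -/
lemma domList_image (e : Finset ℕ) (f : ℕ → ℕ)
    (hmono : ∀ x ∈ e, ∀ y ∈ e, x < y → f x < f y)
    (hle : ∀ x ∈ e, f x ≤ x) : DomList (e.image f) e := by
  have hinj : Set.InjOn f e := by
    intro x hx y hy hxy
    by_contra hne
    rcases lt_or_gt_of_ne hne with h | h
    · exact absurd hxy (ne_of_lt (hmono x hx y hy h))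
    · exact absurd hxy.symm (ne_of_lt (hmono y hy x hx h))
  set l := e.sort (· ≤ ·) with hl
  have hmem : ∀ x ∈ l, x ∈ e := fun x hx => (Finset.mem_sort _).mp hx
  have hperm : List.Perm ((e.image f).sort (· ≤ ·)) (l.map f) := by
    have h1 : (↑((e.image f).sort (· ≤ ·)) : Multiset ℕ) = (↑(l.map f) : Multiset ℕ) := by
      rw [Finset.sort_eq, Finset.image_val_of_injOn hinj, hl]
      rw [← Multiset.map_coe, Finset.sort_eq]
    exact Multiset.coe_eq_coe.mp h1
  have hsorted : (l.map f).Pairwise (· ≤ ·) := by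
    rw [List.pairwise_map]
    have := List.sortedLT_iff_pairwise.mp e.sortedLT_sort
    exact this.imp_of_mem (fun {a b} ha hb hab =>
      le_of_lt (hmono a (hmem a ha) b (hmem b hb) hab))
  have heq : (e.image f).sort (· ≤ ·) = l.map f :=
    List.Perm.eq_of_pairwise' ((e.image f).pairwise_sort _) hsorted hperm
  unfold DomList
  rw [heq, ← hl, List.forall₂_map_left_iff]
  exact List.forall₂_same.mpr (fun x hx => hle x (hmem x hx))

theorem stmt3 (n r t : ℕ) (F : Finset (Finset ℕ))
    (hF : ∀ e ∈ F, e ⊆ Finset.Icc 1 n ∧ e.card = r)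
    (hstable : StableFam F)
    (R₀ I' : Finset ℕ) (hR₀ : R₀ ⊆ Finset.Icc 1 n)
    (hI'sub : I' ⊆ Finset.Icc 1 n \ R₀)
    (hinit : ∀ x ∈ I', ∀ y ∈ Finset.Icc 1 n \ R₀, y ≤ x → y ∈ I')
    (hI'card : r * t ≤ I'.card)
    (M : Finset (Finset ℕ)) (hMF : M ⊆ F) (hMcard : M.card = t)
    (hMdisj : (M : Set (Finset ℕ)).Pairwise Disjoint)
    (hMavoid : ∀ e ∈ M, Disjoint e R₀) :
    ∃ M' : Finset (Finset ℕ), M' ⊆ F ∧ M'.card = t ∧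
      (M' : Set (Finset ℕ)).Pairwise Disjoint ∧
      (∀ e ∈ M', Disjoint e R₀) ∧ (∀ e ∈ M', e ⊆ I') := by
  classical
  set S : Finset ℕ := M.biUnion (fun e => e) with hSdef
  have heS : ∀ e ∈ M, e ⊆ S := fun e he => Finset.subset_biUnion_of_mem (fun e => e) he
  have hSsub : S ⊆ Finset.Icc 1 n \ R₀ := by
    intro x hx
    rw [hSdef, Finset.mem_biUnion] at hx
    obtain ⟨e, he, hxe⟩ := hx
    refine Finset.mem_sdiff.mpr ⟨(hF e (hMF he)).1 hxe, fun hxR => ?_⟩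
    exact (Finset.disjoint_left.mp (hMavoid e he)) hxe hxR
  have hScard : S.card = t * r := by
    rw [hSdef, Finset.card_biUnion (fun x hx y hy hxy => hMdisj hx hy hxy)]
    rw [Finset.sum_congr rfl (fun e he => (hF e (hMF he)).2), Finset.sum_const, hMcard,
      smul_eq_mul]
  have hk : S.card ≤ I'.card := by rw [hScard, mul_comm]; exact hI'card
  set ψ := S.orderEmbOfFin rfl with hψ
  set φ := I'.orderEmbOfFin rfl with hφ
  -- key: the i-th element of I' is at most the i-th element of S
  have key : ∀ i : Fin S.card, φ (Fin.castLE hk i) ≤ ψ i := by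
    intro i
    set a := ψ i with ha
    have haS : a ∈ S := S.orderEmbOfFin_mem rfl i
    by_cases haI : a ∈ I'
    · by_contra hcon
      push_neg at hcon
      -- the i+1 elements ψ j, j ≤ i, all lie in I' and are < φ (castLE i)
      have hsub : ((Finset.Iic i).image (fun j => ψ j)) ⊆
          ((Finset.Iio (Fin.castLE hk i)).image (fun m => φ m)) := by
        intro x hx
        rw [Finset.mem_image] at hx
        obtain ⟨j, hj, hjx⟩ := hx
        have hxle : x ≤ a := by
          rw [← hjx, ha]; exact ψ.monotone (Finset.mem_Iic.mp hj)
        have hxS : x ∈ S := by rw [← hjx]; exact S.orderEmbOfFin_mem rfl j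
        have hxI : x ∈ I' := hinit a haI x (hSsub hxS) hxle
        obtain ⟨m, hm⟩ : ∃ m, φ m = x := by
          have := Set.ext_iff.mp (I'.range_orderEmbOfFin rfl) x
          exact this.mpr hxI
        rw [Finset.mem_image]
        refine ⟨m, Finset.mem_Iio.mpr ?_, hm⟩
        have : φ m < φ (Fin.castLE hk i) := lt_of_le_of_lt (hm ▸ hxle) hcon
        exact φ.lt_iff_lt.mp this
    -- now compare cardinalities
      have hc1 : ((Finset.Iic i).image (fun j => ψ j)).card = i.val + 1 := by
        rw [Finset.card_image_of_injective _ ψ.injective, Fin.card_Iic]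
      have hc2 : ((Finset.Iio (Fin.castLE hk i)).image (fun m => φ m)).card = i.val := by
        rw [Finset.card_image_of_injective _ φ.injective, Fin.card_Iio, Fin.coe_castLE]
      have := Finset.card_le_card hsub
      omega
    · have hlt : ∀ x ∈ I', x < a := by
        intro x hx
        by_contra hge
        push_neg at hge
        exact haI (hinit x hx a (hSsub haS) hge)
      exact le_of_lt (hlt _ (I'.orderEmbOfFin_mem rfl _))
  -- the compressing map
  set f : ℕ → ℕ := fun x =>
    if h : x ∈ S then φ (Fin.castLE hk ((S.orderIsoOfFin rfl).symm ⟨x, h⟩)) else x with hf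
  have hfval : ∀ x (h : x ∈ S), f x = φ (Fin.castLE hk ((S.orderIsoOfFin rfl).symm ⟨x, h⟩)) := by
    intro x h; rw [hf]; simp [h]
  have hback : ∀ x, ∀ h : x ∈ S, ψ ((S.orderIsoOfFin rfl).symm ⟨x, h⟩) = x := by
    intro x h
    rw [hψ, ← Finset.coe_orderIsoOfFin_apply S rfl, OrderIso.apply_symm_apply]
  have hfI : ∀ x ∈ S, f x ∈ I' := by
    intro x h; rw [hfval x h]; exact I'.orderEmbOfFin_mem rfl _
  have hfle : ∀ x ∈ S, f x ≤ x := by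
    intro x h
    rw [hfval x h]
    have := key ((S.orderIsoOfFin rfl).symm ⟨x, h⟩)
    rwa [hback x h] at this
  have hfmono : ∀ x ∈ S, ∀ y ∈ S, x < y → f x < f y := by
    intro x hx y hy hxy
    rw [hfval x hx, hfval y hy]
    have hsym : (S.orderIsoOfFin rfl).symm ⟨x, hx⟩ < (S.orderIsoOfFin rfl).symm ⟨y, hy⟩ :=
      ψ.lt_iff_lt.mp (by rw [hback x hx, hback y hy]; exact hxy)
    exact φ.strictMono (by simpa [Fin.lt_def] using hsym)
  have hfinjS : Set.InjOn f S := by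
    intro x hx y hy hxy
    by_contra hne
    rcases lt_or_gt_of_ne hne with h | h
    · exact absurd hxy (ne_of_lt (hfmono x hx y hy h))
    · exact absurd hxy.symm (ne_of_lt (hfmono y hy x hx h))
  refine ⟨M.image (fun e => e.image f), ?_, ?_, ?_, ?_, ?_⟩
  · -- ⊆ F
    intro e' he'
    rw [Finset.mem_image] at he'
    obtain ⟨e, he, rfl⟩ := he'
    refine hstable e (hMF he) _ (fun a ha => ?_) ?_
    · rw [Finset.mem_image] at ha
      obtain ⟨x, hx, rfl⟩ := ha
      have := hI'sub (hfI x (heS e he hx))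
      rw [Finset.mem_sdiff, Finset.mem_Icc] at this
      exact this.1.1
    · exact domList_image e f
        (fun x hx y hy hxy => hfmono x (heS e he hx) y (heS e he hy) hxy)
        (fun x hx => hfle x (heS e he hx))
  · -- card
    rw [Finset.card_image_of_injOn, hMcard]
    intro e₁ h₁ e₂ h₂ heq
    have heq' : e₁.image f = e₂.image f := heq
    apply Finset.Subset.antisymm <;> intro x hx
    · have hm : f x ∈ e₂.image f := heq' ▸ Finset.mem_image_of_mem f hx
      rw [Finset.mem_image] at hm
      obtain ⟨y, hy, hyx⟩ := hm
      rwa [← hfinjS (heS e₂ h₂ hy) (heS e₁ h₁ hx) hyx]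
    · have hm : f x ∈ e₁.image f := heq'.symm ▸ Finset.mem_image_of_mem f hx
      rw [Finset.mem_image] at hm
      obtain ⟨y, hy, hyx⟩ := hm
      rwa [← hfinjS (heS e₁ h₁ hy) (heS e₂ h₂ hx) hyx]
  · -- pairwise disjoint
    intro e₁' h₁' e₂' h₂' hne
    simp only [Finset.coe_image, Set.mem_image, Finset.mem_coe] at h₁' h₂'
    obtain ⟨e₁, h₁, rfl⟩ := h₁'
    obtain ⟨e₂, h₂, rfl⟩ := h₂'
    have hne' : e₁ ≠ e₂ := fun h => hne (by rw [h])
    have hdisj := hMdisj h₁ h₂ hne'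
    rw [Finset.disjoint_left]
    intro x hx₁ hx₂
    rw [Finset.mem_image] at hx₁ hx₂
    obtain ⟨y₁, hy₁, rfl⟩ := hx₁
    obtain ⟨y₂, hy₂, hy₂x⟩ := hx₂
    have : y₂ = y₁ := hfinjS (heS e₂ h₂ hy₂) (heS e₁ h₁ hy₁) hy₂x
    exact Finset.disjoint_left.mp hdisj hy₁ (this ▸ hy₂)
  · -- avoids R₀
    intro e' he'
    rw [Finset.mem_image] at he'
    obtain ⟨e, he, rfl⟩ := he'
    rw [Finset.disjoint_left]
    intro x hx
    rw [Finset.mem_image] at hx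
    obtain ⟨y, hy, rfl⟩ := hx
    have := hI'sub (hfI y (heS e he hy))
    rw [Finset.mem_sdiff] at this
    exact this.2
  · -- contained in I'
    intro e' he'
    rw [Finset.mem_image] at he'
    obtain ⟨e, he, rfl⟩ := he'
    intro x hx
    rw [Finset.mem_image] at hx
    obtain ⟨y, hy, rfl⟩ := hx
    exact hfI y (heS e he hy)
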